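/- arXiv:1802.02640 — 3 statements merged into one kernel-verified Lean document; each statement's English description precedes it below -/
import Mathlib

section
/- For a (k+1,k,z) system using Staircase codes (n = k+1, one straggler), the cumulative distribution function of the Master's waiting time satisfies, for all t > 0: F_{T_SC}(t) = F(t_{k+1})^{k+1} + (k+1) · F(t_k)^k · (1 − F(t_{k+1})), where F(s) = 1 − exp(−λ(k−z)s) for s ≥ 0 (and F(s)=0 for s<0), t_k = max{ t − c/(k−z), 0 }, and t_{k+1} = max{ ((k+1−z)/(k−z))·(t − c/(k+1−z)), 0 }. -/
open MeasureTheory ProbabilityTheory Real Finset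

/-- The `d`-th order statistic (the `d`-th smallest value, `1`-indexed) of the
values `f 0, …, f (n-1)`. -/
noncomputable def orderStat {n : ℕ} (f : Fin n → ℝ) (d : ℕ) : ℝ :=
  ((List.ofFn f).insertionSort (· ≤ ·)).getD (d - 1) 0

/-- The `m`-th harmonic number `H_m = ∑_{i=1}^m 1/i` (with `H_0 = 0`), as a real number. -/
noncomputable def harmonic' (m : ℕ) : ℝ := ∑ i ∈ Finset.range m, (1 : ℝ) / (i + 1)

/-- The Master's waiting time under Staircase codes:
`T_SC = min_{d ∈ {k,…,n}} ((k-z)/(d-z)) ⬝ T_(d)`, where the service times are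
`T i = c/(k-z) + T' i`. -/
noncomputable def TSC (n k z : ℕ) (hkn : k ≤ n) (c : ℝ) (T' : Fin n → ℝ) : ℝ :=
  (Finset.Icc k n).inf' (Finset.nonempty_Icc.mpr hkn) fun d =>
    ((k : ℝ) - z) / ((d : ℝ) - z) *
      orderStat (fun i => c / ((k : ℝ) - z) + T' i) d

/-- The CDF `F(s) = 1 - exp(-θ s)` for `s ≥ 0`, and `F(s) = 0` for `s < 0`. -/
noncomputable def Fcdf (θ s : ℝ) : ℝ := if 0 ≤ s then 1 - Real.exp (-θ * s) else 0

lemma countP_ofFn {n : ℕ} (g : Fin n → ℝ) (p : ℝ → Bool) :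
    (List.ofFn g).countP p = (Finset.univ.filter (fun i => p (g i) = true)).card := by
  induction n with
  | zero => simp
  | succ n ih =>
    rw [List.ofFn_succ, List.countP_cons, ih (fun i => g i.succ)]
    rw [Finset.card_filter, Finset.card_filter, Fin.sum_univ_succ]
    exact add_comm _ _

lemma sorted_getD_le_iff : ∀ {l : List ℝ}, l.Pairwise (· ≤ ·) → ∀ {i : ℕ}, i < l.length →
    ∀ s : ℝ, (l.getD i 0 ≤ s ↔ i + 1 ≤ l.countP (fun x => decide (x ≤ s))) := by
  intro l
  induction l with
  | nil => intro _ i hi; simp at hi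
  | cons a tl ih =>
    intro hl i hi s
    rw [List.pairwise_cons] at hl
    match i with
    | 0 =>
      simp only [List.getD_cons_zero, List.countP_cons]
      constructor
      · intro h; simp [h]
      · intro h
        by_contra has
        have h0 : tl.countP (fun x => decide (x ≤ s)) = 0 := by
          rw [List.countP_eq_zero]
          intro x hx
          simp only [decide_eq_true_iff]
          intro hxs
          exact has (le_trans (hl.1 x hx) hxs)
        simp [h0, has] at h
    | i + 1 =>
      simp only [List.getD_cons_succ, List.countP_cons]
      simp only [List.length_cons, Nat.add_lt_add_iff_right] at hi
      by_cases has : a ≤ s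
      · rw [ih hl.2 hi s]
        have h1 : (if (decide (a ≤ s)) = true then 1 else 0) = 1 := by simp [has]
        rw [h1]
        omega
      · have h0 : tl.countP (fun x => decide (x ≤ s)) = 0 := by
          rw [List.countP_eq_zero]
          intro x hx
          simp only [decide_eq_true_iff]
          intro hxs
          exact has (le_trans (hl.1 x hx) hxs)
        have hmem : tl.getD i 0 ∈ tl := by
          rw [List.getD_eq_getElem _ _ hi]
          exact List.getElem_mem _
        have hgt : ¬ tl.getD i 0 ≤ s := fun h => has (le_trans (hl.1 _ hmem) h)
        have h1 : (if (decide (a ≤ s)) = true then 1 else 0) = 0 := by simp [has]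
        rw [h0, h1]
        exact iff_of_false hgt (by omega)

lemma orderStat_le_iff {n : ℕ} (g : Fin n → ℝ) {d : ℕ} (hd1 : 1 ≤ d) (hdn : d ≤ n) (s : ℝ) :
    orderStat g d ≤ s ↔ d ≤ (Finset.univ.filter (fun i => g i ≤ s)).card := by
  have hsort : (((List.ofFn g).insertionSort (· ≤ ·))).Pairwise (· ≤ ·) :=
    List.pairwise_insertionSort _ _
  have hlen : ((List.ofFn g).insertionSort (· ≤ ·)).length = n := by
    rw [List.length_insertionSort, List.length_ofFn]
  have hi : d - 1 < ((List.ofFn g).insertionSort (· ≤ ·)).length := by omega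
  rw [orderStat, sorted_getD_le_iff hsort hi s,
    (List.perm_insertionSort (· ≤ ·) (List.ofFn g)).countP_eq,
    countP_ofFn g (fun x => decide (x ≤ s))]
  have : d - 1 + 1 = d := by omega
  rw [this]
  simp only [decide_eq_true_iff]

lemma orderStat_top_le_iff {n : ℕ} (hn : 0 < n) (g : Fin n → ℝ) (s : ℝ) :
    orderStat g n ≤ s ↔ ∀ i, g i ≤ s := by
  rw [orderStat_le_iff g hn le_rfl s]
  constructor
  · intro h i
    have hall : Finset.univ.filter (fun i => g i ≤ s) = Finset.univ := by
      apply Finset.eq_univ_of_card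
      have := Finset.card_filter_le (Finset.univ : Finset (Fin n)) (fun i => g i ≤ s)
      simp only [Finset.card_univ, Fintype.card_fin] at *
      omega
    have : i ∈ Finset.univ.filter (fun i => g i ≤ s) := by
      rw [hall]; exact Finset.mem_univ i
    exact (Finset.mem_filter.mp this).2
  · intro h
    have : Finset.univ.filter (fun i => g i ≤ s) = Finset.univ :=
      Finset.filter_eq_self.mpr (fun i _ => h i)
    rw [this]
    simp

lemma orderStat_second_le_iff {k : ℕ} (hk : 1 ≤ k) (g : Fin (k + 1) → ℝ) (s : ℝ) :
    orderStat g k ≤ s ↔ ∃ i, ∀ j, j ≠ i → g j ≤ s := by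
  rw [orderStat_le_iff g hk (Nat.le_succ k) s]
  have hsum := Finset.card_filter_add_card_filter_not
    (s := (Finset.univ : Finset (Fin (k + 1)))) (p := fun i => g i ≤ s)
  simp only [Finset.card_univ, Fintype.card_fin] at hsum
  constructor
  · intro h
    have hle1 : (Finset.univ.filter (fun i => ¬ g i ≤ s)).card ≤ 1 := by omega
    obtain ⟨a, ha⟩ := Finset.card_le_one_iff_subset_singleton.mp hle1
    refine ⟨a, fun j hj => ?_⟩
    by_contra hgj
    have : j ∈ ({a} : Finset (Fin (k + 1))) := ha (Finset.mem_filter.mpr ⟨Finset.mem_univ j, hgj⟩)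
    exact hj (Finset.mem_singleton.mp this)
  · intro ⟨i, hi⟩
    have hsub : Finset.univ.filter (fun j => ¬ g j ≤ s) ⊆ {i} := by
      intro j hj
      rw [Finset.mem_filter] at hj
      rw [Finset.mem_singleton]
      by_contra hji
      exact hj.2 (hi j hji)
    have := Finset.card_le_card hsub
    simp only [Finset.card_singleton] at this
    omega

lemma Fcdf_nonneg {θ : ℝ} (hθ : 0 ≤ θ) (s : ℝ) : 0 ≤ Fcdf θ s := by
  rw [Fcdf]
  split
  · rename_i hs
    have : Real.exp (-θ * s) ≤ 1 := by
      rw [← Real.exp_zero]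
      apply Real.exp_le_exp.mpr
      nlinarith
    linarith
  · exact le_refl 0

lemma Fcdf_le_one (θ s : ℝ) : Fcdf θ s ≤ 1 := by
  rw [Fcdf]
  split
  · have := Real.exp_nonneg (-θ * s); linarith
  · norm_num

lemma Fcdf_max (θ s : ℝ) : Fcdf θ (max s 0) = Fcdf θ s := by
  by_cases hs : 0 ≤ s
  · rw [max_eq_left hs]
  · rw [max_eq_right (le_of_lt (lt_of_not_ge hs))]
    simp [Fcdf, hs]

lemma measure_preimage_Iic {Ω : Type*} [MeasurableSpace Ω] (μ : Measure Ω) [IsProbabilityMeasure μ]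
    (X : Ω → ℝ) (hm : Measurable X) (θ : ℝ)
    (hpos : ∀ ω, 0 ≤ X ω)
    (h : ∀ t : ℝ, 0 ≤ t → μ {ω | t < X ω} = ENNReal.ofReal (Real.exp (-θ * t)))
    (s : ℝ) : μ (X ⁻¹' Set.Iic s) = ENNReal.ofReal (Fcdf θ s) := by
  by_cases hs : 0 ≤ s
  · have hcompl : X ⁻¹' Set.Iic s = {ω | s < X ω}ᶜ := by
      ext ω; simp [not_lt]
    have hmeas2 : MeasurableSet {ω | s < X ω} := hm measurableSet_Ioi
    rw [hcompl, measure_compl hmeas2 (measure_ne_top μ _), h s hs, measure_univ,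
      Fcdf, if_pos hs, ENNReal.ofReal_sub 1 (Real.exp_nonneg _), ENNReal.ofReal_one]
  · have hempty : X ⁻¹' Set.Iic s = ∅ := by
      ext ω
      simp only [Set.mem_preimage, Set.mem_Iic, Set.mem_empty_iff_false, iff_false, not_le]
      exact lt_of_lt_of_le (lt_of_not_ge hs) (hpos ω)
    rw [hempty, measure_empty, Fcdf, if_neg hs, ENNReal.ofReal_zero]

lemma measure_preimage_Ioi {Ω : Type*} [MeasurableSpace Ω] (μ : Measure Ω) [IsProbabilityMeasure μ]
    (X : Ω → ℝ) (θ : ℝ)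
    (hpos : ∀ ω, 0 ≤ X ω)
    (h : ∀ t : ℝ, 0 ≤ t → μ {ω | t < X ω} = ENNReal.ofReal (Real.exp (-θ * t)))
    (s : ℝ) : μ (X ⁻¹' Set.Ioi s) = ENNReal.ofReal (1 - Fcdf θ s) := by
  by_cases hs : 0 ≤ s
  · have heq : X ⁻¹' Set.Ioi s = {ω | s < X ω} := rfl
    rw [heq, h s hs, Fcdf, if_pos hs]
    ring_nf
  · have huniv : X ⁻¹' Set.Ioi s = Set.univ := by
      ext ω
      simp only [Set.mem_preimage, Set.mem_Ioi, Set.mem_univ, iff_true]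
      exact lt_of_lt_of_le (lt_of_not_ge hs) (hpos ω)
    rw [huniv, measure_univ, Fcdf, if_neg hs]
    simp

/-- exact CDF of the Master's waiting time for a `(k+1,k,z)` system
(one straggler) using Staircase codes. -/
theorem staircase_waiting_time_cdf_one_straggler
    {Ω : Type*} [MeasurableSpace Ω] (μ : Measure Ω) [IsProbabilityMeasure μ]
    (k z : ℕ) (hzk : z < k)
    (lam c : ℝ) (hlam : 0 < lam) (hc : 0 ≤ c)
    (T' : Fin (k + 1) → Ω → ℝ)
    (hmeas : ∀ i, Measurable (T' i))
    (hindep : iIndepFun T' μ)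
    (hnonneg : ∀ i ω, 0 ≤ T' i ω)
    (hccdf : ∀ i, ∀ t : ℝ, 0 ≤ t →
      μ {ω | t < T' i ω} = ENNReal.ofReal (Real.exp (-(lam * ((k : ℝ) - z)) * t))) :
    ∀ t : ℝ, 0 < t →
      (μ {ω | TSC (k + 1) k z (Nat.le_succ k) c (fun i => T' i ω) ≤ t}).toReal =
        Fcdf (lam * ((k : ℝ) - z))
            (max ((((k : ℝ) + 1 - z) / ((k : ℝ) - z)) * (t - c / ((k : ℝ) + 1 - z))) 0) ^ (k + 1)
          + ((k : ℝ) + 1) *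
            Fcdf (lam * ((k : ℝ) - z)) (max (t - c / ((k : ℝ) - z)) 0) ^ k *
            (1 - Fcdf (lam * ((k : ℝ) - z))
              (max ((((k : ℝ) + 1 - z) / ((k : ℝ) - z)) * (t - c / ((k : ℝ) + 1 - z))) 0)) := by
  intro t ht
  have hk1 : 1 ≤ k := by omega
  have hkz : (0 : ℝ) < (k : ℝ) - z := by
    have : (z : ℝ) < (k : ℝ) := by exact_mod_cast hzk
    linarith
  have hkz1 : (0 : ℝ) < (k : ℝ) + 1 - z := by linarith
  set θ := lam * ((k : ℝ) - z) with hθdef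
  have hθ : 0 < θ := mul_pos hlam hkz
  set s₁ : ℝ := t - c / ((k : ℝ) - z) with hs₁def
  set s₂ : ℝ := (((k : ℝ) + 1 - z) / ((k : ℝ) - z)) * (t - c / ((k : ℝ) + 1 - z)) with hs₂def
  have hs12 : s₁ < s₂ := by
    have h2 : s₂ = s₁ + t / ((k : ℝ) - z) := by
      rw [hs₂def, hs₁def]; field_simp; ring
    have h3 : 0 < t / ((k : ℝ) - z) := div_pos ht hkz
    rw [h2]
    linarith
  -- characterization of the event
  have hsecond : ∀ ω : Ω,
      (((k : ℝ) - z) / ((k : ℝ) - z) *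
          orderStat (fun i => c / ((k : ℝ) - z) + T' i ω) k ≤ t ↔
        ∃ i, ∀ j, j ≠ i → T' j ω ≤ s₁) := by
    intro ω
    rw [div_self hkz.ne', one_mul, orderStat_second_le_iff hk1]
    apply exists_congr; intro i
    apply forall_congr'; intro j
    apply imp_congr_right; intro _
    rw [hs₁def]
    constructor <;> intro h <;> linarith
  have htop : ∀ ω : Ω,
      (((k : ℝ) - z) / (((k : ℝ) + 1) - z) *
          orderStat (fun i => c / ((k : ℝ) - z) + T' i ω) (k + 1) ≤ t ↔
        ∀ i, T' i ω ≤ s₂) := by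
    intro ω
    have hα : (0 : ℝ) < ((k : ℝ) - z) / (((k : ℝ) + 1) - z) := div_pos hkz hkz1
    rw [mul_comm, ← le_div_iff₀ hα, orderStat_top_le_iff (Nat.succ_pos k)]
    have heq : t / (((k : ℝ) - z) / (((k : ℝ) + 1) - z)) - c / ((k : ℝ) - z) = s₂ := by
      rw [hs₂def]; field_simp
    constructor
    · intro h i
      have h' : c / ((k : ℝ) - z) + T' i ω ≤ t / (((k : ℝ) - z) / (((k : ℝ) + 1) - z)) := h i
      linarith
    · intro h i
      show c / ((k : ℝ) - z) + T' i ω ≤ t / (((k : ℝ) - z) / (((k : ℝ) + 1) - z))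
      have := h i
      linarith
  have hchar : ∀ ω : Ω,
      (TSC (k + 1) k z (Nat.le_succ k) c (fun i => T' i ω) ≤ t ↔
        ((∀ j, T' j ω ≤ s₂) ∨ ∃ i, s₂ < T' i ω ∧ ∀ j, j ≠ i → T' j ω ≤ s₁)) := by
    intro ω
    rw [TSC, Finset.inf'_le_iff]
    constructor
    · rintro ⟨d, hd, hle⟩
      rw [Finset.mem_Icc] at hd
      have hd' : d = k ∨ d = k + 1 := by omega
      rcases hd' with rfl | rfl
      · obtain ⟨i, hi⟩ := (hsecond ω).mp hle
        by_cases hB : ∀ j, T' j ω ≤ s₂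
        · exact Or.inl hB
        · push_neg at hB
          obtain ⟨j₀, hj₀⟩ := hB
          rcases eq_or_ne j₀ i with rfl | hne
          · exact Or.inr ⟨j₀, hj₀, hi⟩
          · exact absurd (hi j₀ hne) (by linarith)
      · left
        push_cast at hle
        exact (htop ω).mp hle
    · rintro (hB | ⟨i, hi2, hi1⟩)
      · refine ⟨k + 1, by rw [Finset.mem_Icc]; omega, ?_⟩
        push_cast
        exact (htop ω).mpr hB
      · exact ⟨k, by rw [Finset.mem_Icc]; omega, (hsecond ω).mpr ⟨i, hi1⟩⟩
  -- the event as a disjoint union of measurable sets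
  set B : Set Ω := ⋂ j, T' j ⁻¹' Set.Iic s₂ with hBdef
  set C : Fin (k + 1) → Set Ω :=
    fun i => ⋂ j, T' j ⁻¹' (if j = i then Set.Ioi s₂ else Set.Iic s₁) with hCdef
  have hevent : {ω | TSC (k + 1) k z (Nat.le_succ k) c (fun i => T' i ω) ≤ t}
      = B ∪ ⋃ i, C i := by
    ext ω
    simp only [Set.mem_setOf_eq, Set.mem_union]
    rw [hchar ω]
    constructor
    · rintro (hB | ⟨i, hi2, hi1⟩)
      · exact Or.inl (Set.mem_iInter.mpr fun j => Set.mem_preimage.mpr (Set.mem_Iic.mpr (hB j)))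
      · refine Or.inr (Set.mem_iUnion.mpr ⟨i, Set.mem_iInter.mpr fun j => ?_⟩)
        by_cases hj : j = i
        · subst hj
          simp only [if_pos rfl]
          exact Set.mem_preimage.mpr (Set.mem_Ioi.mpr hi2)
        · simp only [if_neg hj]
          exact Set.mem_preimage.mpr (Set.mem_Iic.mpr (hi1 j hj))
    · rintro (hB | hC)
      · exact Or.inl fun j => Set.mem_Iic.mp (Set.mem_preimage.mp (Set.mem_iInter.mp hB j))
      · obtain ⟨i, hmemi⟩ := Set.mem_iUnion.mp hC
        have h1 := Set.mem_iInter.mp hmemi i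
        rw [if_pos rfl] at h1
        refine Or.inr ⟨i, Set.mem_Ioi.mp (Set.mem_preimage.mp h1), fun j hj => ?_⟩
        have h2 := Set.mem_iInter.mp hmemi j
        rw [if_neg hj] at h2
        exact Set.mem_Iic.mp (Set.mem_preimage.mp h2)
  have hCmeas : ∀ i, MeasurableSet (C i) := by
    intro i
    apply MeasurableSet.iInter
    intro j
    apply hmeas j
    split
    · exact measurableSet_Ioi
    · exact measurableSet_Iic
  have hdisj : Disjoint B (⋃ i, C i) := by
    rw [Set.disjoint_left]
    intro ω hB hC
    obtain ⟨i, hmemi⟩ := Set.mem_iUnion.mp hC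
    have h1 := Set.mem_iInter.mp hmemi i
    rw [if_pos rfl] at h1
    have h2 := Set.mem_iInter.mp hB i
    exact absurd (Set.mem_Iic.mp (Set.mem_preimage.mp h2))
      (not_le.mpr (Set.mem_Ioi.mp (Set.mem_preimage.mp h1)))
  have hpair : Pairwise (Function.onFun Disjoint C) := by
    intro i i' hne
    rw [Function.onFun, Set.disjoint_left]
    intro ω hCi hCi'
    have h1 := Set.mem_iInter.mp hCi i'
    rw [if_neg hne.symm] at h1
    have h2 := Set.mem_iInter.mp hCi' i'
    rw [if_pos rfl] at h2
    have := Set.mem_Iic.mp (Set.mem_preimage.mp h1)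
    have := Set.mem_Ioi.mp (Set.mem_preimage.mp h2)
    linarith
  -- compute measures via independence
  have hμB : μ B = ENNReal.ofReal (Fcdf θ s₂) ^ (k + 1) := by
    rw [hBdef, hindep.meas_iInter (fun j => ⟨Set.Iic s₂, measurableSet_Iic, rfl⟩)]
    have : ∀ j : Fin (k + 1), μ (T' j ⁻¹' Set.Iic s₂) = ENNReal.ofReal (Fcdf θ s₂) :=
      fun j => measure_preimage_Iic μ (T' j) (hmeas j) θ (hnonneg j) (hccdf j) s₂
    rw [Finset.prod_congr rfl (fun j _ => this j), Finset.prod_const, Finset.card_univ,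
      Fintype.card_fin]
  have hμC : ∀ i, μ (C i) =
      ENNReal.ofReal (1 - Fcdf θ s₂) * ENNReal.ofReal (Fcdf θ s₁) ^ k := by
    intro i
    rw [hCdef]
    rw [hindep.meas_iInter (fun j =>
      ⟨if j = i then Set.Ioi s₂ else Set.Iic s₁, by
        split
        · exact measurableSet_Ioi
        · exact measurableSet_Iic, rfl⟩)]
    have hfac : ∀ j : Fin (k + 1),
        μ (T' j ⁻¹' (if j = i then Set.Ioi s₂ else Set.Iic s₁)) =
          if j = i then ENNReal.ofReal (1 - Fcdf θ s₂) else ENNReal.ofReal (Fcdf θ s₁) := by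
      intro j
      by_cases hj : j = i
      · rw [if_pos hj, if_pos hj]
        exact measure_preimage_Ioi μ (T' j) θ (hnonneg j) (hccdf j) s₂
      · rw [if_neg hj, if_neg hj]
        exact measure_preimage_Iic μ (T' j) (hmeas j) θ (hnonneg j) (hccdf j) s₁
    rw [Finset.prod_congr rfl (fun j _ => hfac j),
      ← Finset.mul_prod_erase _ _ (Finset.mem_univ i), if_pos rfl,
      Finset.prod_congr rfl (fun j hj => if_neg (Finset.mem_erase.mp hj).1),
      Finset.prod_const, Finset.card_erase_of_mem (Finset.mem_univ i), Finset.card_univ,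
      Fintype.card_fin, Nat.add_sub_cancel]
  have hμ : μ {ω | TSC (k + 1) k z (Nat.le_succ k) c (fun i => T' i ω) ≤ t}
      = ENNReal.ofReal (Fcdf θ s₂) ^ (k + 1) +
        (k + 1) • (ENNReal.ofReal (1 - Fcdf θ s₂) * ENNReal.ofReal (Fcdf θ s₁) ^ k) := by
    rw [hevent, measure_union hdisj (MeasurableSet.iUnion hCmeas), measure_iUnion hpair hCmeas,
      hμB, tsum_fintype, Finset.sum_congr rfl (fun i _ => hμC i), Finset.sum_const,
      Finset.card_univ, Fintype.card_fin]
  -- numeric conversion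
  have hF1 : 0 ≤ Fcdf θ s₁ := Fcdf_nonneg hθ.le s₁
  have hF2 : 0 ≤ Fcdf θ s₂ := Fcdf_nonneg hθ.le s₂
  have hF2' : 0 ≤ 1 - Fcdf θ s₂ := by have := Fcdf_le_one θ s₂; linarith
  rw [hμ, ← ENNReal.ofReal_pow hF2, ← ENNReal.ofReal_pow hF1,
    ← ENNReal.ofReal_mul hF2', nsmul_eq_mul]
  have hcast : ((k + 1 : ℕ) : ENNReal) = ENNReal.ofReal ((k : ℝ) + 1) := by
    rw [← ENNReal.ofReal_natCast]
    push_cast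
    ring_nf
  rw [hcast, ← ENNReal.ofReal_mul (by positivity), ← ENNReal.ofReal_add (by positivity)
    (by positivity), ENNReal.toReal_ofReal (by positivity)]
  rw [Fcdf_max, Fcdf_max]
  ring
end

section
/- The bounded-difference constant n−k for the function d is tight: there exist a vector (t_1,...,t_n) ∈ ℝ₊ⁿ, a coordinate i, and a value t'_i ∈ ℝ₊ such that |d(t_1,...,t_i,...,t_n) − d(t_1,...,t'_i,...,t_n)| = n−k, where d(t_1,...,t_n) = argmin{ ((k−z)/(j−z))·t_(j) : j ∈ {k,...,n} }. -/
open MeasureTheory ProbabilityTheory Real Finset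

/-- The number of workers minimizing the Master's waiting time:
`d(t_1,…,t_n) = argmin { ((k-z)/(i-z)) ⬝ t_(i) : i ∈ {k,…,n} }`,
ties broken by taking the smallest minimizing index. -/
noncomputable def dsel (n k z : ℕ) (t : Fin n → ℝ) : ℕ :=
  sInf {i : ℕ | i ∈ Finset.Icc k n ∧
    ∀ j ∈ Finset.Icc k n,
      ((k : ℝ) - z) / ((i : ℝ) - z) * orderStat t i ≤
        ((k : ℝ) - z) / ((j : ℝ) - z) * orderStat t j}

lemma orderStat_of_monotone {n : ℕ} {f : Fin n → ℝ} (hf : Monotone f)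
    {m : ℕ} (h1 : 1 ≤ m) (h2 : m ≤ n) :
    orderStat f m = f ⟨m - 1, by omega⟩ := by
  unfold orderStat
  rw [List.Pairwise.insertionSort_eq (List.sortedLE_ofFn_iff.mpr hf).pairwise]
  rw [List.getD_eq_getElem _ _ (by simpa using by omega : m - 1 < (List.ofFn f).length)]
  simp

/-- the bounded-difference constant `n-k` for the function `d = dsel`
is tight: there is a nonnegative input vector, a coordinate, and a new nonnegative value
for that coordinate so that the value of `d` changes by exactly `n-k`. -/
theorem dsel_bounded_differences_tight
    (n k z : ℕ) (hzk : z < k) (hkn : k < n) :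
    ∃ t : Fin n → ℝ, (∀ j, 0 ≤ t j) ∧
      ∃ (i : Fin n) (ti' : ℝ), 0 ≤ ti' ∧
        |(dsel n k z t : ℝ) - (dsel n k z (Function.update t i ti') : ℝ)| = (n : ℝ) - k := by
  have hK : (0:ℝ) < (k:ℝ) - z := by
    have : (z:ℝ) < k := by exact_mod_cast hzk
    linarith
  set t : Fin n → ℝ := fun j => max 0 (((j:ℝ) + 1 - z) / ((k:ℝ) - z)) with ht
  have htmono : Monotone t := by
    intro a b hab
    apply max_le_max le_rfl
    gcongr
    exact_mod_cast hab
  -- order statistics of t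
  have hO : ∀ m ∈ Finset.Icc k n, orderStat t m = ((m:ℝ) - z) / ((k:ℝ) - z) := by
    intro m hm
    rw [Finset.mem_Icc] at hm
    have h1 : 1 ≤ m := by omega
    rw [orderStat_of_monotone htmono h1 hm.2]
    have hcast : ((⟨m - 1, by omega⟩ : Fin n) : ℝ) = (m : ℝ) - 1 := by
      simp only [Fin.val_mk]
      push_cast [Nat.cast_sub h1]
      ring
    simp only [ht, hcast]
    rw [max_eq_right]
    · ring_nf
    · apply div_nonneg _ hK.le
      have : (z:ℝ) < m := by exact_mod_cast lt_of_lt_of_le hzk hm.1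
      linarith
  have hiz : ∀ m ∈ Finset.Icc k n, (0:ℝ) < (m:ℝ) - z := by
    intro m hm
    rw [Finset.mem_Icc] at hm
    have : (z:ℝ) < m := by exact_mod_cast lt_of_lt_of_le hzk hm.1
    linarith
  have hval : ∀ m ∈ Finset.Icc k n,
      ((k:ℝ) - z) / ((m:ℝ) - z) * orderStat t m = 1 := by
    intro m hm
    rw [hO m hm]
    field_simp [(hiz m hm).ne', hK.ne']
  -- dsel t = k
  have hkIcc : k ∈ Finset.Icc k n := Finset.mem_Icc.mpr ⟨le_rfl, hkn.le⟩
  have hd1 : dsel n k z t = k := by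
    apply le_antisymm
    · apply Nat.sInf_le
      refine ⟨hkIcc, fun j hj => ?_⟩
      rw [hval k hkIcc, hval j hj]
    · refine le_csInf ⟨k, hkIcc, fun j hj => by rw [hval k hkIcc, hval j hj]⟩ ?_
      intro b hb
      exact (Finset.mem_Icc.mp hb.1).1
  -- the update
  have hn1 : n - 1 < n := by omega
  set i : Fin n := ⟨n - 1, hn1⟩ with hi
  set ti' : ℝ := ((n:ℝ) - 1 - z) / ((k:ℝ) - z) with hti'
  have hti'nonneg : 0 ≤ ti' := by
    apply div_nonneg _ hK.le
    have hz : (z:ℝ) < k := by exact_mod_cast hzk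
    have hk : (k:ℝ) ≤ (n:ℝ) - 1 := by
      have : (k:ℝ) + 1 ≤ n := by exact_mod_cast hkn
      linarith
    linarith
  set t' : Fin n → ℝ := Function.update t i ti' with ht'
  have ht'mono : Monotone t' := by
    intro a b hab
    simp only [ht', Function.update_apply]
    by_cases hb : b = i
    · by_cases ha : a = i
      · simp [ha, hb]
      · simp only [ha, hb, if_true, if_false]
        have hav : (a:ℕ) < n - 1 := by
          have := a.isLt
          have : (a:ℕ) ≠ n - 1 := fun h => ha (Fin.ext (by simpa using h))
          omega
        apply max_le hti'nonneg
        rw [hti']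
        gcongr
        have : ((a:ℕ):ℝ) + 1 ≤ ((n:ℝ) - 1) := by
          have : (a:ℕ) + 1 ≤ n - 1 := by omega
          have h2 : (((a:ℕ):ℝ) + 1) ≤ ((n - 1 : ℕ) : ℝ) := by exact_mod_cast this
          rw [Nat.cast_sub (by omega)] at h2
          push_cast at h2
          linarith
        linarith
    · have ha : a ≠ i := by
        intro h
        apply hb
        have hib : i ≤ b := h ▸ hab
        have h1 : (i : ℕ) ≤ (b : ℕ) := hib
        have h2 := b.isLt
        apply Fin.ext
        simp only [hi, Fin.val_mk] at h1 ⊢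
        omega
      simp only [ha, hb, if_false]
      exact htmono hab
  have hO' : ∀ m ∈ Finset.Icc k n, m < n →
      orderStat t' m = ((m:ℝ) - z) / ((k:ℝ) - z) := by
    intro m hm hmn
    rw [Finset.mem_Icc] at hm
    have h1 : 1 ≤ m := by omega
    rw [orderStat_of_monotone ht'mono h1 hm.2]
    have hne : (⟨m - 1, by omega⟩ : Fin n) ≠ i := by
      intro h
      have := Fin.mk.injEq (m-1) (by omega : m - 1 < n) (n-1) hn1 ▸ h
      simp only [hi, Fin.mk.injEq] at h
      omega
    rw [ht', Function.update_of_ne hne]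
    have := hO m (Finset.mem_Icc.mpr hm)
    rw [orderStat_of_monotone htmono h1 hm.2] at this
    exact this
  have hOn : orderStat t' n = ti' := by
    rw [orderStat_of_monotone ht'mono (by omega) le_rfl]
    have : (⟨n - 1, by omega⟩ : Fin n) = i := rfl
    rw [ht', this, Function.update_self]
  have hnIcc : n ∈ Finset.Icc k n := Finset.mem_Icc.mpr ⟨hkn.le, le_rfl⟩
  have hvaln : ((k:ℝ) - z) / ((n:ℝ) - z) * orderStat t' n < 1 := by
    rw [hOn, hti']
    have hnz := hiz n hnIcc
    rw [div_mul_div_comm]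
    rw [div_lt_one (by positivity)]
    nlinarith
  have hval' : ∀ m ∈ Finset.Icc k n, m < n →
      ((k:ℝ) - z) / ((m:ℝ) - z) * orderStat t' m = 1 := by
    intro m hm hmn
    rw [hO' m hm hmn]
    field_simp [(hiz m hm).ne', hK.ne']
  -- dsel t' = n
  have hd2 : dsel n k z t' = n := by
    have hnmem : n ∈ {i : ℕ | i ∈ Finset.Icc k n ∧
        ∀ j ∈ Finset.Icc k n,
          ((k : ℝ) - z) / ((i : ℝ) - z) * orderStat t' i ≤
            ((k : ℝ) - z) / ((j : ℝ) - z) * orderStat t' j} := by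
      refine ⟨hnIcc, fun j hj => ?_⟩
      rcases eq_or_lt_of_le (Finset.mem_Icc.mp hj).2 with h | h
      · subst h; exact le_rfl
      · rw [hval' j hj h]
        exact hvaln.le
    apply le_antisymm
    · exact Nat.sInf_le hnmem
    · refine le_csInf ⟨n, hnmem⟩ ?_
      intro b hb
      obtain ⟨hb1, hb2⟩ := hb
      rcases eq_or_lt_of_le (Finset.mem_Icc.mp hb1).2 with h | h
      · omega
      · exfalso
        have := hb2 n hnIcc
        rw [hval' b hb1 h] at this
        linarith [hvaln]
  refine ⟨t, fun j => le_max_left _ _, i, ti', hti'nonneg, ?_⟩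
  rw [hd1, hd2]
  rw [abs_sub_comm, abs_of_nonneg (by
    have : (k:ℝ) ≤ n := by exact_mod_cast hkn.le
    linarith)]
end

section
/- Let T'_1,...,T'_n be i.i.d. exponential random variables with rate λ(k−z), T'_(i) their order statistics, and define the residual waiting time T'_SC = min_{d∈{k,...,n}} ((k−z)/(d−z))·T'_(d). For d in {k,...,n} and t ≥ 0 let C_d(t) = { T'_(k) > t(d−z)/(k−z) } ∩ ⋂_{i=d+1}^{n} { T'_(i) − T'_(i−1) > t/(k−z) }. Then for every d in {k,...,n}, C_d(t) ⊆ { T'_SC > t }; consequently Pr{ T'_SC > t } ≥ max_{d∈{k,...,n}} Pr(C_d(t)). -/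
open MeasureTheory ProbabilityTheory Real Finset

/-- The residual waiting time `T'_SC = min_{d ∈ {k,…,n}} ((k-z)/(d-z)) ⬝ T'_(d)`. -/
noncomputable def TSC' (n k z : ℕ) (hkn : k ≤ n) (T' : Fin n → ℝ) : ℝ :=
  (Finset.Icc k n).inf' (Finset.nonempty_Icc.mpr hkn) fun d =>
    ((k : ℝ) - z) / ((d : ℝ) - z) * orderStat T' d

lemma orderStat_mono {n : ℕ} (f : Fin n → ℝ) {a b : ℕ} (hab : a ≤ b) (hb : b ≤ n) :
    orderStat f a ≤ orderStat f b := by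
  unfold orderStat
  rcases Nat.eq_zero_or_pos n with hn | hn
  · have ha0 : a = 0 := by omega
    have hb0 : b = 0 := by omega
    simp [ha0, hb0]
  · have hlen : ((List.ofFn f).insertionSort (· ≤ ·)).length = n := by
      rw [List.length_insertionSort, List.length_ofFn]
    have hb' : b - 1 < ((List.ofFn f).insertionSort (· ≤ ·)).length := by omega
    have ha' : a - 1 < ((List.ofFn f).insertionSort (· ≤ ·)).length := by omega
    rw [List.getD_eq_getElem _ _ ha', List.getD_eq_getElem _ _ hb']
    have hsorted : ((List.ofFn f).insertionSort (· ≤ ·)).Pairwise (· ≤ ·) :=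
      List.pairwise_insertionSort _ _
    exact hsorted.rel_get_of_le (a := ⟨a - 1, ha'⟩) (b := ⟨b - 1, hb'⟩) (by simp; omega)

/-- each event `C_d(t)` is contained in `{ T'_SC > t }`, and
consequently `Pr{ T'_SC > t } ≥ max_{d ∈ {k,…,n}} Pr(C_d(t))`. -/
theorem Cd_subset_residual_waiting_tail
    {Ω : Type*} [MeasurableSpace Ω] (μ : Measure Ω) [IsProbabilityMeasure μ]
    (n k z : ℕ) (hzk : z < k) (hkn : k ≤ n)
    (lam : ℝ) (hlam : 0 < lam)
    (T' : Fin n → Ω → ℝ)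
    (hmeas : ∀ i, Measurable (T' i))
    (hindep : iIndepFun T' μ)
    (hnonneg : ∀ i ω, 0 ≤ T' i ω)
    (hccdf : ∀ i, ∀ t : ℝ, 0 ≤ t →
      μ {ω | t < T' i ω} = ENNReal.ofReal (Real.exp (-(lam * ((k : ℝ) - z)) * t)))
    (t : ℝ) (ht : 0 ≤ t)
    (C : ℕ → Set Ω)
    (hC : ∀ d, C d = {ω | t * ((d : ℝ) - z) / ((k : ℝ) - z) < orderStat (fun i => T' i ω) k ∧
      ∀ i ∈ Finset.Ioc d n,
        t / ((k : ℝ) - z) <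
          orderStat (fun i' => T' i' ω) i - orderStat (fun i' => T' i' ω) (i - 1)}) :
    (∀ d ∈ Finset.Icc k n, C d ⊆ {ω | t < TSC' n k z hkn (fun i => T' i ω)}) ∧
      (Finset.Icc k n).sup' (Finset.nonempty_Icc.mpr hkn) (fun d => μ (C d)) ≤
        μ {ω | t < TSC' n k z hkn (fun i => T' i ω)} := by
  have hkz : (0 : ℝ) < (k : ℝ) - z := by
    have : (z : ℝ) < k := by exact_mod_cast hzk
    linarith
  have hsub : ∀ d ∈ Finset.Icc k n, C d ⊆ {ω | t < TSC' n k z hkn (fun i => T' i ω)} := by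
    intro d hd ω hω
    rw [Finset.mem_Icc] at hd
    rw [hC] at hω
    obtain ⟨h1, h2⟩ := hω
    -- the key claim
    have key : ∀ m, k ≤ m → m ≤ n →
        t * ((m : ℝ) - z) / ((k : ℝ) - z) < orderStat (fun i => T' i ω) m := by
      intro m hkm
      induction m, hkm using Nat.le_induction with
      | base =>
        intro _
        have hdk : (k : ℝ) ≤ (d : ℝ) := by exact_mod_cast hd.1
        rw [div_lt_iff₀ hkz] at h1 ⊢
        nlinarith
      | succ m hkm ih =>
        intro hm1n
        by_cases hmd : m + 1 ≤ d
        · have hmono : orderStat (fun i => T' i ω) k ≤ orderStat (fun i => T' i ω) (m + 1) :=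
            orderStat_mono _ (by omega) hm1n
          have hdm : ((m : ℝ) + 1) ≤ (d : ℝ) := by exact_mod_cast hmd
          push_cast
          rw [div_lt_iff₀ hkz] at h1 ⊢
          nlinarith
        · have hgap := h2 (m + 1) (Finset.mem_Ioc.mpr ⟨by omega, hm1n⟩)
          have ihm := ih (by omega)
          simp only [Nat.add_sub_cancel] at hgap
          push_cast
          rw [div_lt_iff₀ hkz] at ihm hgap ⊢
          nlinarith
    rw [Set.mem_setOf_eq, TSC', Finset.lt_inf'_iff]
    intro m hm
    rw [Finset.mem_Icc] at hm
    have hmz : (0 : ℝ) < (m : ℝ) - z := by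
      have : (z : ℝ) < m := by exact_mod_cast lt_of_lt_of_le hzk hm.1
      linarith
    have h := key m hm.1 hm.2
    rw [div_lt_iff₀ hkz] at h
    rw [div_mul_eq_mul_div, lt_div_iff₀ hmz]
    nlinarith [h]
  exact ⟨hsub, Finset.sup'_le _ _ fun d hd => measure_mono (hsub d hd)⟩
end
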